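/- arXiv:1602.05906 — 2 statements merged into one kernel-verified Lean document; each statement's English description precedes it below -/
import Mathlib

section
/- Let B(u) = u²/(2a) + u²/(2b) with 0 < a < b and λ > 0. Define p(s) = ∫_{bs}^∞ λ e^{−λB(u)} du for s ≥ 0 and p(s) = ∫_{−as}^∞ λ e^{−λB(u)} du for s < 0. Then Σ_{s∈ℤ} s·p(s) = −Σ_{s>0} s ∫_{as}^{bs} λ e^{−λB(u)} du, and in particular this expectation is strictly negative. -/
open MeasureTheory Set

/-- Bias of the minimum location for the asymmetric trend: with
`B(u) = u²/(2a) + u²/(2b)` and `p` the unnormalized location distribution,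
`Σ_s s·p(s) = -Σ_{s>0} s ∫_{as}^{bs} λ e^{-λB(u)} du < 0`. -/
theorem stmt14 (a b lam : ℝ) (ha : 0 < a) (hab : a < b) (hlam : 0 < lam)
    (B : ℝ → ℝ) (hB : ∀ u, B u = u ^ 2 / (2 * a) + u ^ 2 / (2 * b))
    (p : ℤ → ℝ)
    (hp : ∀ s : ℤ, p s =
      if 0 ≤ s then ∫ u in Set.Ici (b * (s : ℝ)), lam * Real.exp (-lam * B u)
      else ∫ u in Set.Ici (-(a * (s : ℝ))), lam * Real.exp (-lam * B u)) :
    Summable (fun s : ℤ => (s : ℝ) * p s) ∧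
    (∑' s : ℤ, (s : ℝ) * p s =
      -∑' n : ℕ, ((n : ℝ) + 1) *
        ∫ u in (a * ((n : ℝ) + 1))..(b * ((n : ℝ) + 1)), lam * Real.exp (-lam * B u)) ∧
    (∑' s : ℤ, (s : ℝ) * p s < 0) := by
  have hb : 0 < b := ha.trans hab
  set g : ℝ → ℝ := fun u => lam * Real.exp (-lam * B u) with hg_def
  set k : ℝ := lam * (1 / (2 * a) + 1 / (2 * b)) with hk_def
  have hk : 0 < k := by positivity
  have hg_eq : ∀ u, g u = lam * Real.exp (-k * u ^ 2) := by
    intro u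
    simp only [hg_def, hk_def, hB u]
    ring_nf
  -- integrability
  have hg_int : Integrable g := by
    have : Integrable (fun u : ℝ => lam * Real.exp (-k * u ^ 2)) :=
      (integrable_exp_neg_mul_sq hk).const_mul lam
    exact this.congr (Filter.Eventually.of_forall fun u => (hg_eq u).symm)
  have hg_pos : ∀ u, 0 < g u := fun u => by
    rw [hg_eq u]; positivity
  have hg_nonneg : ∀ u, 0 ≤ g u := fun u => (hg_pos u).le
  -- splitting lemma
  have hsplit : ∀ c₁ c₂ : ℝ, c₁ ≤ c₂ →
      (∫ u in Ici c₁, g u) = (∫ u in c₁..c₂, g u) + ∫ u in Ici c₂, g u := by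
    intro c₁ c₂ h
    rw [integral_Ici_eq_integral_Ioi, integral_Ici_eq_integral_Ioi,
      intervalIntegral.integral_of_le h,
      ← setIntegral_union (Ioc_disjoint_Ioi le_rfl) measurableSet_Ioi
        hg_int.integrableOn hg_int.integrableOn,
      Ioc_union_Ioi_eq_Ioi h]
  -- positivity of interval integrals
  have hintpos : ∀ n : ℕ, 0 < ∫ u in (a * ((n : ℝ) + 1))..(b * ((n : ℝ) + 1)), g u := by
    intro n
    apply intervalIntegral.intervalIntegral_pos_of_pos (f := g)
      hg_int.intervalIntegrable hg_pos
    have : (0 : ℝ) < (n : ℝ) + 1 := by positivity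
    nlinarith
  -- Gaussian tail bound : ∫_{Ici c} g ≤ C * exp (-(k/2) * c^2) for c ≥ 0
  set C : ℝ := ∫ u : ℝ, lam * Real.exp (-(k / 2) * u ^ 2) with hC_def
  have hC_int : Integrable (fun u : ℝ => lam * Real.exp (-(k / 2) * u ^ 2)) :=
    (integrable_exp_neg_mul_sq (by positivity)).const_mul lam
  have hC_nonneg : 0 ≤ C :=
    integral_nonneg fun u => by positivity
  have htail : ∀ c : ℝ, 0 ≤ c →
      (∫ u in Ici c, g u) ≤ C * Real.exp (-(k / 2) * c ^ 2) := by
    intro c hc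
    have h1 : (∫ u in Ici c, g u) ≤
        ∫ u in Ici c, Real.exp (-(k / 2) * c ^ 2) * (lam * Real.exp (-(k / 2) * u ^ 2)) := by
      apply setIntegral_mono_on hg_int.integrableOn
        (((hC_int.const_mul _)).integrableOn) measurableSet_Ici
      intro u hu
      rw [hg_eq u]
      have hcu : c ≤ u := hu
      have hsq : c ^ 2 ≤ u ^ 2 := by nlinarith
      have : Real.exp (-k * u ^ 2) ≤
          Real.exp (-(k / 2) * c ^ 2) * Real.exp (-(k / 2) * u ^ 2) := by
        rw [← Real.exp_add]
        apply Real.exp_le_exp.2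
        nlinarith
      nlinarith [this, hlam.le]
    have h2 : (∫ u in Ici c, Real.exp (-(k / 2) * c ^ 2) *
        (lam * Real.exp (-(k / 2) * u ^ 2))) ≤ Real.exp (-(k / 2) * c ^ 2) * C := by
      rw [integral_const_mul, hC_def]
      apply mul_le_mul_of_nonneg_left _ (Real.exp_pos _).le
      exact setIntegral_le_integral hC_int (Filter.Eventually.of_forall fun u => by positivity)
    linarith [h1, h2, mul_comm C (Real.exp (-(k / 2) * c ^ 2))]
  -- summability of the tail series
  have hsum_gen : ∀ c : ℝ, 0 < c →
      Summable (fun n : ℕ => ((n : ℝ) + 1) * ∫ u in Ici (c * ((n : ℝ) + 1)), g u) := by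
    intro c hc
    set r : ℝ := Real.exp (-(k / 2) * c ^ 2) with hr_def
    have hr1 : r < 1 := by
      rw [hr_def, Real.exp_lt_one_iff]
      nlinarith [mul_pos hk (mul_pos hc hc)]
    have hr0 : 0 < r := Real.exp_pos _
    have hgeo : Summable (fun n : ℕ => ((n : ℝ) + 1) * (C * r ^ (n + 1))) := by
      have h0 : Summable (fun n : ℕ => (n : ℝ) ^ 1 * r ^ n) :=
        summable_pow_mul_geometric_of_norm_lt_one 1
          (by rw [Real.norm_eq_abs, abs_of_pos hr0]; exact hr1)
      have h1 : Summable (fun n : ℕ => ((n + 1 : ℕ) : ℝ) ^ 1 * r ^ (n + 1)) :=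
        h0.comp_injective (add_left_injective 1)
      have := h1.mul_left C
      apply this.congr
      intro n
      push_cast
      ring
    apply Summable.of_nonneg_of_le _ _ hgeo
    · intro n
      have : (0:ℝ) ≤ ∫ u in Ici (c * ((n : ℝ) + 1)), g u :=
        setIntegral_nonneg measurableSet_Ici fun u _ => hg_nonneg u
      positivity
    · intro n
      have hcn : (0 : ℝ) ≤ c * ((n : ℝ) + 1) := by positivity
      have h1 := htail _ hcn
      have h2 : Real.exp (-(k / 2) * (c * ((n : ℝ) + 1)) ^ 2) ≤ r ^ (n + 1) := by
        rw [hr_def, ← Real.exp_nat_mul]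
        apply Real.exp_le_exp.2
        have hn1 : (1 : ℝ) ≤ (n : ℝ) + 1 := by have : (0:ℝ) ≤ (n:ℝ) := n.cast_nonneg; linarith
        have : ((n : ℝ) + 1) ≤ ((n : ℝ) + 1) ^ 2 := by nlinarith
        push_cast
        have hkc : (0:ℝ) ≤ k * c ^ 2 := by positivity
        have hn0 : (0:ℝ) ≤ (n:ℝ) := n.cast_nonneg
        nlinarith [mul_nonneg (mul_nonneg hkc (by linarith : (0:ℝ) ≤ (n:ℝ)+1)) hn0, mul_nonneg hkc hn0]
      have h3 : (∫ u in Ici (c * ((n : ℝ) + 1)), g u) ≤ C * r ^ (n + 1) := by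
        calc (∫ u in Ici (c * ((n : ℝ) + 1)), g u)
            ≤ C * Real.exp (-(k / 2) * (c * ((n : ℝ) + 1)) ^ 2) := h1
          _ ≤ C * r ^ (n + 1) := by
              apply mul_le_mul_of_nonneg_left h2 hC_nonneg
      have hn0 : (0 : ℝ) ≤ (n : ℝ) + 1 := by positivity
      calc ((n : ℝ) + 1) * ∫ u in Ici (c * ((n : ℝ) + 1)), g u
          ≤ ((n : ℝ) + 1) * (C * r ^ (n + 1)) := by
            exact mul_le_mul_of_nonneg_left h3 hn0
        _ = _ := rfl
  have hSb := hsum_gen b hb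
  have hSa := hsum_gen a ha
  -- the ℤ-sum structure
  set F : ℤ → ℝ := fun s => (s : ℝ) * p s with hF_def
  set fpos : ℕ → ℝ := fun n => (n : ℝ) * ∫ u in Ici (b * (n : ℝ)), g u with hfpos_def
  set fneg : ℕ → ℝ := fun n => -(((n : ℝ) + 1) * ∫ u in Ici (a * ((n : ℝ) + 1)), g u)
    with hfneg_def
  have hF_eq : F = fun s : ℤ => Int.rec fpos fneg s := by
    funext s
    cases s with
    | ofNat n =>
        simp only [hF_def, Int.ofNat_eq_coe, hp, hfpos_def]
        rw [if_pos (Int.ofNat_nonneg n)]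
        push_cast
        rfl
    | negSucc n =>
        simp only [hF_def, hp, hfneg_def]
        rw [if_neg (by exact not_le.2 (Int.negSucc_lt_zero n))]
        push_cast [Int.cast_negSucc]
        rw [show -(a * -((n:ℝ) + 1)) = a * ((n:ℝ) + 1) by ring]
        ring
  -- summability and sums of the two halves
  have hfpos_sum : HasSum fpos (∑' n : ℕ, ((n : ℝ) + 1) * ∫ u in Ici (b * ((n : ℝ) + 1)), g u) := by
    have hfun : (fun n : ℕ => fpos (n + 1)) =
        fun n : ℕ => ((n : ℝ) + 1) * ∫ u in Ici (b * ((n : ℝ) + 1)), g u := by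
      funext n
      simp only [hfpos_def]
      push_cast
      rfl
    have h1 : HasSum (fun n : ℕ => fpos (n + 1))
        (∑' n : ℕ, ((n : ℝ) + 1) * ∫ u in Ici (b * ((n : ℝ) + 1)), g u) := by
      rw [hfun]; exact hSb.hasSum
    rw [← hasSum_nat_add_iff' 1]
    convert h1 using 1
    · rfl
    simp [hfpos_def]
  have hfneg_sum : HasSum fneg
      (-∑' n : ℕ, ((n : ℝ) + 1) * ∫ u in Ici (a * ((n : ℝ) + 1)), g u) :=
    hSa.hasSum.neg
  have hFsum : HasSum F
      ((∑' n : ℕ, ((n : ℝ) + 1) * ∫ u in Ici (b * ((n : ℝ) + 1)), g u) +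
        -∑' n : ℕ, ((n : ℝ) + 1) * ∫ u in Ici (a * ((n : ℝ) + 1)), g u) := by
    rw [hF_eq]
    exact hfpos_sum.int_rec hfneg_sum
  -- combine the two tsums into the interval-integral series
  have hdiff : ∀ n : ℕ,
      ((n : ℝ) + 1) * (∫ u in (a * ((n : ℝ) + 1))..(b * ((n : ℝ) + 1)), g u) =
      ((n : ℝ) + 1) * (∫ u in Ici (a * ((n : ℝ) + 1)), g u) -
        ((n : ℝ) + 1) * (∫ u in Ici (b * ((n : ℝ) + 1)), g u) := by
    intro n
    have hle : a * ((n : ℝ) + 1) ≤ b * ((n : ℝ) + 1) := by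
      have : (0 : ℝ) < (n : ℝ) + 1 := by positivity
      nlinarith
    rw [hsplit _ _ hle]
    ring
  have hTsum : Summable (fun n : ℕ =>
      ((n : ℝ) + 1) * ∫ u in (a * ((n : ℝ) + 1))..(b * ((n : ℝ) + 1)), g u) := by
    apply Summable.congr (hSa.sub hSb)
    intro n
    rw [hdiff n]
  have hT_eq : (∑' n : ℕ, ((n : ℝ) + 1) * ∫ u in (a * ((n : ℝ) + 1))..(b * ((n : ℝ) + 1)), g u)
      = (∑' n : ℕ, ((n : ℝ) + 1) * ∫ u in Ici (a * ((n : ℝ) + 1)), g u) -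
        ∑' n : ℕ, ((n : ℝ) + 1) * ∫ u in Ici (b * ((n : ℝ) + 1)), g u := by
    rw [← Summable.tsum_sub hSa hSb]
    exact tsum_congr fun n => by rw [hdiff n]
  have hsum_F : Summable F := hFsum.summable
  have htsum_F : ∑' s : ℤ, F s =
      -∑' n : ℕ, ((n : ℝ) + 1) * ∫ u in (a * ((n : ℝ) + 1))..(b * ((n : ℝ) + 1)), g u := by
    rw [hFsum.tsum_eq, hT_eq]
    ring
  refine ⟨hsum_F, htsum_F, ?_⟩
  rw [htsum_F]
  have hpos : 0 < ∑' n : ℕ, ((n : ℝ) + 1) *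
      ∫ u in (a * ((n : ℝ) + 1))..(b * ((n : ℝ) + 1)), g u := by
    apply Summable.tsum_pos hTsum (fun n => ?_) 0
    · have := hintpos 0
      positivity
    · have := hintpos n
      positivity
  linarith
end

section
/- Let (Y_t)_{t∈I} be independent shifted exponentials with locations T_t and common rate λ > 0, and let B(u) = Σ_{t: T_t ≤ u}(u − T_t). Then the probabilities P(τ = s) = ∫_{T_s}^∞ λ e^{−λB(u)} du sum to 1 over s ∈ I, i.e., Σ_{s∈I} ∫_{T_s}^∞ λ e^{−λB(u)} du = 1. -/
open scoped Classical

open MeasureTheory Set Filter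

/-- Derivative of `-exp(-λ B u)` off the breakpoints. -/
lemma exp17_deriv {I : Type*} [Fintype I] (T : I → ℝ) (lam : ℝ)
    (B : ℝ → ℝ) (hB : ∀ u, B u = ∑ t : I, max (u - T t) 0) (x : ℝ) (hx : ∀ t, T t ≠ x) :
    HasDerivAt (fun u => -Real.exp (-lam * B u))
      (((Finset.univ.filter fun t => T t ≤ x).card : ℝ) * (lam * Real.exp (-lam * B x))) x := by
  have hBd : HasDerivAt B ((Finset.univ.filter fun t : I => T t ≤ x).card : ℝ) x := by
    have h1 : HasDerivAt (fun u => ∑ t : I, max (u - T t) 0)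
        (∑ t : I, if T t ≤ x then (1:ℝ) else 0) x := by
      apply HasDerivAt.fun_sum
      intro t _
      rcases lt_or_gt_of_ne (hx t) with h | h
      · have hev : (fun u => max (u - T t) 0) =ᶠ[nhds x] (fun u => u - T t) := by
          filter_upwards [Ioi_mem_nhds h] with u hu
          exact max_eq_left (by simp only [mem_Ioi] at hu; linarith)
        rw [if_pos h.le]
        exact ((hasDerivAt_id x).sub_const (T t)).congr_of_eventuallyEq hev
      · have hev : (fun u => max (u - T t) 0) =ᶠ[nhds x] (fun _ => (0:ℝ)) := by
          filter_upwards [Iio_mem_nhds h] with u hu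
          exact max_eq_right (by simp only [mem_Iio] at hu; linarith)
        rw [if_neg (not_le.2 h)]
        exact (hasDerivAt_const x (0:ℝ)).congr_of_eventuallyEq hev
    have h2 : (∑ t : I, if T t ≤ x then (1:ℝ) else 0)
        = ((Finset.univ.filter fun t : I => T t ≤ x).card : ℝ) := by
      simp [Finset.sum_boole]
    have h3 : B = fun u => ∑ t : I, max (u - T t) 0 := funext hB
    rw [h3, ← h2]
    exact h1
  have h4 := ((hBd.const_mul (-lam)).exp).fun_neg
  refine h4.congr_deriv ?_
  ring

/-- `B` tends to infinity, so `-exp(-λ B)` tends to `0`. -/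
lemma exp17_tendsto {I : Type*} [Fintype I] [Nonempty I] (T : I → ℝ) (lam : ℝ) (hlam : 0 < lam)
    (B : ℝ → ℝ) (hB : ∀ u, B u = ∑ t : I, max (u - T t) 0) :
    Tendsto (fun u => -Real.exp (-lam * B u)) atTop (nhds 0) := by
  obtain ⟨t0⟩ := (inferInstance : Nonempty I)
  have hBtop : Tendsto B atTop atTop := by
    have hf : Tendsto (fun u : ℝ => u - T t0) atTop atTop := by
      simpa [sub_eq_add_neg] using tendsto_atTop_add_const_right atTop (-T t0)
        (tendsto_id (α := ℝ))
    have hle : (fun u : ℝ => u - T t0) ≤ᶠ[atTop] B := by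
      apply Eventually.of_forall
      intro u
      have h1 : max (u - T t0) 0 ≤ B u := by
        rw [hB u]
        exact Finset.single_le_sum (f := fun t : I => max (u - T t) 0)
          (fun t _ => le_max_right _ _) (Finset.mem_univ t0)
      have h2 : u - T t0 ≤ max (u - T t0) 0 := le_max_left _ _
      exact h2.trans h1
    exact tendsto_atTop_mono' atTop hle hf
  have h1 : Tendsto (fun u => -lam * B u) atTop atBot := by
    have h2 := tendsto_neg_atTop_atBot.comp (hBtop.const_mul_atTop hlam)
    exact h2.congr fun u => (neg_mul _ _).symm
  have h2 := Real.tendsto_exp_atBot.comp h1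
  have h3 := h2.neg
  simpa using h3

/-- Key lemma by strong induction on the number of breakpoints to the right of `a`. -/
lemma exp17_key {I : Type*} [Fintype I] [Nonempty I] (T : I → ℝ) (lam : ℝ) (hlam : 0 < lam)
    (B : ℝ → ℝ) (hB : ∀ u, B u = ∑ t : I, max (u - T t) 0) :
    ∀ n : ℕ, ∀ a : ℝ, (Finset.univ.filter fun t => a < T t).card ≤ n →
      IntegrableOn (fun u => ((Finset.univ.filter fun t => T t ≤ u).card : ℝ)
          * (lam * Real.exp (-lam * B u))) (Set.Ioi a) volume ∧
      ∫ u in Set.Ioi a, ((Finset.univ.filter fun t => T t ≤ u).card : ℝ)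
          * (lam * Real.exp (-lam * B u)) = Real.exp (-lam * B a) := by
  have hBcont : Continuous B := by
    have h3 : B = fun u => ∑ t : I, max (u - T t) 0 := funext hB
    rw [h3]
    exact continuous_finset_sum _ fun t _ =>
      ((continuous_id.sub continuous_const).max continuous_const)
  have hgcont : Continuous fun u => -Real.exp (-lam * B u) :=
    (Real.continuous_exp.comp (continuous_const.mul hBcont)).neg
  have hBnonneg : ∀ u, 0 ≤ B u := by
    intro u
    rw [hB u]
    exact Finset.sum_nonneg fun t _ => le_max_right _ _
  -- base case as an auxiliary claim
  have base : ∀ a : ℝ, (∀ t, T t ≤ a) →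
      IntegrableOn (fun u => ((Finset.univ.filter fun t => T t ≤ u).card : ℝ)
          * (lam * Real.exp (-lam * B u))) (Set.Ioi a) volume ∧
      ∫ u in Set.Ioi a, ((Finset.univ.filter fun t => T t ≤ u).card : ℝ)
          * (lam * Real.exp (-lam * B u)) = Real.exp (-lam * B a) := by
    intro a ha
    have hderiv : ∀ x ∈ Set.Ioi a, HasDerivAt (fun u => -Real.exp (-lam * B u))
        (((Finset.univ.filter fun t => T t ≤ x).card : ℝ) * (lam * Real.exp (-lam * B x))) x := by
      intro x hx
      exact exp17_deriv T lam B hB x (fun t => ((ha t).trans_lt hx).ne)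
    have hpos : ∀ x ∈ Set.Ioi a, 0 ≤ ((Finset.univ.filter fun t => T t ≤ x).card : ℝ)
        * (lam * Real.exp (-lam * B x)) := by
      intro x _; positivity
    have htend := exp17_tendsto T lam hlam B hB
    refine ⟨integrableOn_Ioi_deriv_of_nonneg hgcont.continuousWithinAt hderiv hpos htend, ?_⟩
    rw [integral_Ioi_of_hasDerivAt_of_nonneg hgcont.continuousWithinAt hderiv hpos htend]
    ring
  intro n
  induction n with
  | zero =>
    intro a hcard
    apply base
    intro t
    by_contra h
    have : t ∈ Finset.univ.filter fun t => a < T t := by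
      simp [not_le.1 h]
    simp only [Nat.le_zero, Finset.card_eq_zero] at hcard
    rw [hcard] at this
    exact absurd this (Finset.notMem_empty t)
  | succ n ih =>
    intro a hcard
    by_cases hS : (Finset.univ.filter fun t => a < T t).Nonempty
    · set S : Finset I := Finset.univ.filter fun t => a < T t with hSdef
      have hSim : (S.image T).Nonempty := hS.image T
      set b : ℝ := (S.image T).min' hSim with hbdef
      obtain ⟨t1, ht1S, ht1b⟩ := Finset.mem_image.1 ((S.image T).min'_mem hSim)
      rw [← hbdef] at ht1b
      have hab : a < b := by
        rw [← ht1b]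
        exact (Finset.mem_filter.1 ht1S).2
      have hble : ∀ t ∈ S, b ≤ T t := fun t ht =>
        (S.image T).min'_le _ (Finset.mem_image_of_mem T ht)
      -- card bound for the inductive hypothesis
      have hsub : (Finset.univ.filter fun t => b < T t) ⊆ S := by
        intro t ht
        simp only [hSdef, Finset.mem_filter, Finset.mem_univ, true_and] at ht ⊢
        exact hab.trans ht
      have ht1not : t1 ∉ Finset.univ.filter fun t => b < T t := by
        simp only [Finset.mem_filter, Finset.mem_univ, true_and, not_lt]
        rw [ht1b]
      have hlt : (Finset.univ.filter fun t => b < T t).card < S.card :=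
        Finset.card_lt_card ((Finset.ssubset_iff_of_subset hsub).2 ⟨t1, ht1S, ht1not⟩)
      have hcard' : (Finset.univ.filter fun t => b < T t).card ≤ n := by
        omega
      obtain ⟨hint_b, heq_b⟩ := ih b hcard'
      -- integrability on (a, b]
      have hNmeas : Measurable fun u => ((Finset.univ.filter fun t : I => T t ≤ u).card : ℝ) := by
        have heq : (fun u => ((Finset.univ.filter fun t : I => T t ≤ u).card : ℝ))
            = fun u => ∑ t : I, if T t ≤ u then (1:ℝ) else 0 := by
          funext u; simp [Finset.sum_boole]
        rw [heq]
        refine Finset.measurable_sum _ fun t _ => Measurable.ite ?_ measurable_const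
          measurable_const
        exact measurableSet_le measurable_const measurable_id
      have hg'meas : Measurable fun u => ((Finset.univ.filter fun t : I => T t ≤ u).card : ℝ)
          * (lam * Real.exp (-lam * B u)) :=
        hNmeas.mul (continuous_const.mul
          (Real.continuous_exp.comp (continuous_const.mul hBcont))).measurable
      have hIoc_int : IntegrableOn (fun u => ((Finset.univ.filter fun t => T t ≤ u).card : ℝ)
          * (lam * Real.exp (-lam * B u))) (Set.Ioc a b) volume := by
        apply Integrable.mono' (g := fun _ => (Fintype.card I : ℝ) * lam)
          (integrableOn_const measure_Ioc_lt_top.ne)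
          hg'meas.aestronglyMeasurable
        apply ae_of_all
        intro u
        rw [Real.norm_eq_abs, abs_of_nonneg (by positivity)]
        have h1 : ((Finset.univ.filter fun t : I => T t ≤ u).card : ℝ) ≤ (Fintype.card I : ℝ) := by
          exact_mod_cast Finset.card_filter_le _ _
        have h2 : Real.exp (-lam * B u) ≤ 1 := by
          rw [Real.exp_le_one_iff]
          have := hBnonneg u
          nlinarith
        have h3 := mul_le_mul h1 (mul_le_mul_of_nonneg_left h2 hlam.le)
          (by positivity) (by positivity)
        simpa using h3
      -- FTC on [a, b]
      have hftc : ∫ u in Set.Ioc a b, ((Finset.univ.filter fun t => T t ≤ u).card : ℝ)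
          * (lam * Real.exp (-lam * B u))
          = (-Real.exp (-lam * B b)) - (-Real.exp (-lam * B a)) := by
        rw [← intervalIntegral.integral_of_le hab.le]
        apply intervalIntegral.integral_eq_sub_of_hasDeriv_right_of_le hab.le
          hgcont.continuousOn
        · intro x hx
          refine (exp17_deriv T lam B hB x fun t => ?_).hasDerivWithinAt
          by_cases h : T t ≤ a
          · exact (h.trans_lt hx.1).ne
          · have : t ∈ S := by simp [hSdef, not_le.1 h]
            exact (hx.2.trans_le (hble t this)).ne'
        · exact (intervalIntegrable_iff_integrableOn_Ioc_of_le hab.le).2 hIoc_int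
      have hunion : Set.Ioc a b ∪ Set.Ioi b = Set.Ioi a := Set.Ioc_union_Ioi_eq_Ioi hab.le
      have hdisj : Disjoint (Set.Ioc a b) (Set.Ioi b) := by
        apply Set.disjoint_left.2
        intro x hx hx'
        exact absurd hx.2 (not_le.2 hx')
      have hint_union : IntegrableOn (fun u => ((Finset.univ.filter fun t => T t ≤ u).card : ℝ)
          * (lam * Real.exp (-lam * B u))) (Set.Ioi a) volume := by
        rw [← hunion]; exact hIoc_int.union hint_b
      refine ⟨hint_union, ?_⟩
      rw [← hunion, setIntegral_union hdisj measurableSet_Ioi hIoc_int hint_b, hftc, heq_b]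
      ring
    · apply base
      intro t
      by_contra h
      exact hS ⟨t, by simp [not_le.1 h]⟩

/-- The minimum-location probabilities of the shifted exponential model sum to one:
`Σ_s ∫_{T s}^∞ λ e^{-λ B(u)} du = 1` where `B(u) = Σ_{t : T t ≤ u} (u - T t)`. -/
theorem stmt17 {I : Type*} [Fintype I] [Nonempty I] (T : I → ℝ) (lam : ℝ) (hlam : 0 < lam)
    (B : ℝ → ℝ)
    (hB : ∀ u, B u = ∑ t ∈ Finset.univ.filter (fun t => T t ≤ u), (u - T t)) :
    ∑ s : I, ∫ u in Set.Ici (T s), lam * Real.exp (-lam * B u) = 1 := by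
  have hB' : ∀ u, B u = ∑ t : I, max (u - T t) 0 := by
    intro u
    rw [hB u, Finset.sum_filter]
    refine Finset.sum_congr rfl fun t _ => ?_
    split_ifs with h
    · exact (max_eq_left (by linarith)).symm
    · exact (max_eq_right (by linarith [not_le.1 h])).symm
  have hBcont : Continuous B := by
    have h3 : B = fun u => ∑ t : I, max (u - T t) 0 := funext hB'
    rw [h3]
    exact continuous_finset_sum _ fun t _ =>
      ((continuous_id.sub continuous_const).max continuous_const)
  set a : ℝ := Finset.univ.inf' Finset.univ_nonempty T with hadef
  have hle : ∀ t, a ≤ T t := fun t => Finset.inf'_le _ (Finset.mem_univ t)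
  have hBa : B a = 0 := by
    rw [hB' a]
    exact Finset.sum_eq_zero fun t _ => max_eq_right (by linarith [hle t])
  obtain ⟨hint, heq⟩ := exp17_key T lam hlam B hB' _ a le_rfl
  -- integrability on (-∞, a]
  have hg'zero : ∀ u < a, ((Finset.univ.filter fun t : I => T t ≤ u).card : ℝ)
      * (lam * Real.exp (-lam * B u)) = 0 := by
    intro u hu
    have : (Finset.univ.filter fun t : I => T t ≤ u) = ∅ := by
      apply Finset.filter_eq_empty_iff.2
      intro t _
      exact not_le.2 (hu.trans_le (hle t))
    rw [this]
    simp
  have hae : ∀ᵐ u ∂(volume.restrict (Set.Iic a)),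
      ((Finset.univ.filter fun t : I => T t ≤ u).card : ℝ)
        * (lam * Real.exp (-lam * B u)) = 0 := by
    have h1 : ∀ᵐ u ∂(volume.restrict (Set.Iic a)), u ≠ a := by
      apply ae_restrict_of_ae
      rw [ae_iff]
      have : {u : ℝ | ¬ u ≠ a} = {a} := by ext u; simp
      rw [this]
      exact measure_singleton a
    filter_upwards [ae_restrict_mem measurableSet_Iic, h1] with u hu hne
    exact hg'zero u (lt_of_le_of_ne hu hne)
  have hIic_int : IntegrableOn (fun u => ((Finset.univ.filter fun t : I => T t ≤ u).card : ℝ)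
      * (lam * Real.exp (-lam * B u))) (Set.Iic a) volume :=
    (integrable_zero _ _ _).congr (hae.mono fun u hu => hu.symm)
  have hIic_eq : ∫ u in Set.Iic a, ((Finset.univ.filter fun t : I => T t ≤ u).card : ℝ)
      * (lam * Real.exp (-lam * B u)) = 0 := by
    rw [integral_congr_ae hae]
    simp
  have hfull_int : Integrable (fun u => ((Finset.univ.filter fun t : I => T t ≤ u).card : ℝ)
      * (lam * Real.exp (-lam * B u))) volume := by
    rw [← integrableOn_univ, ← Set.Iic_union_Ioi (a := a)]
    exact hIic_int.union hint
  -- each indicator function is dominated by the full density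
  have hfcont : Continuous fun u => lam * Real.exp (-lam * B u) :=
    continuous_const.mul (Real.continuous_exp.comp (continuous_const.mul hBcont))
  have hind_int : ∀ s : I, Integrable
      ((Set.Ici (T s)).indicator fun u => lam * Real.exp (-lam * B u)) volume := by
    intro s
    apply Integrable.mono' hfull_int
      (hfcont.aestronglyMeasurable.indicator measurableSet_Ici)
    apply ae_of_all
    intro u
    by_cases h : T s ≤ u
    · rw [Set.indicator_of_mem (Set.mem_Ici.2 h), Real.norm_eq_abs,
        abs_of_nonneg (by positivity)]
      have h1 : (1:ℝ) ≤ ((Finset.univ.filter fun t : I => T t ≤ u).card : ℝ) := by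
        have : s ∈ Finset.univ.filter fun t : I => T t ≤ u := by simp [h]
        exact_mod_cast Nat.one_le_iff_ne_zero.2 (Finset.card_ne_zero_of_mem this)
      have h2 := mul_le_mul_of_nonneg_right h1
        (by positivity : (0:ℝ) ≤ lam * Real.exp (-lam * B u))
      simpa using h2
    · rw [Set.indicator_of_notMem (fun hm => h (Set.mem_Ici.1 hm))]
      simp only [norm_zero]
      positivity
  have hsum_fun : ∀ u : ℝ, ∑ s : I,
      (Set.Ici (T s)).indicator (fun u => lam * Real.exp (-lam * B u)) u
      = ((Finset.univ.filter fun t : I => T t ≤ u).card : ℝ)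
        * (lam * Real.exp (-lam * B u)) := by
    intro u
    have : ∀ s : I, (Set.Ici (T s)).indicator (fun u => lam * Real.exp (-lam * B u)) u
        = (if T s ≤ u then (1:ℝ) else 0) * (lam * Real.exp (-lam * B u)) := by
      intro s
      by_cases h : T s ≤ u
      · rw [Set.indicator_of_mem (Set.mem_Ici.2 h), if_pos h, one_mul]
      · rw [Set.indicator_of_notMem (fun hm => h (Set.mem_Ici.1 hm)), if_neg h, zero_mul]
    rw [Finset.sum_congr rfl fun s _ => this s, ← Finset.sum_mul]
    congr 1
    simp [Finset.sum_boole]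
  calc ∑ s : I, ∫ u in Set.Ici (T s), lam * Real.exp (-lam * B u)
      = ∑ s : I, ∫ u, (Set.Ici (T s)).indicator (fun u => lam * Real.exp (-lam * B u)) u := by
        refine Finset.sum_congr rfl fun s _ => ?_
        rw [integral_indicator measurableSet_Ici]
    _ = ∫ u, ∑ s : I, (Set.Ici (T s)).indicator (fun u => lam * Real.exp (-lam * B u)) u :=
        (integral_finset_sum _ fun s _ => hind_int s).symm
    _ = ∫ u, ((Finset.univ.filter fun t : I => T t ≤ u).card : ℝ)
          * (lam * Real.exp (-lam * B u)) := by
        congr 1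
        funext u
        exact hsum_fun u
    _ = (∫ u in Set.Iic a, ((Finset.univ.filter fun t : I => T t ≤ u).card : ℝ)
          * (lam * Real.exp (-lam * B u)))
        + ∫ u in Set.Ioi a, ((Finset.univ.filter fun t : I => T t ≤ u).card : ℝ)
          * (lam * Real.exp (-lam * B u)) := by
        rw [← setIntegral_union (Set.Iic_disjoint_Ioi le_rfl) measurableSet_Ioi hIic_int hint,
          Set.Iic_union_Ioi, setIntegral_univ]
    _ = 1 := by
        rw [hIic_eq, heq, hBa]
        simp
end
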